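/- Let c ≥ 0, let A ∈ ℝ^{m×n}, let I be a finite index set, and let {(xᵢ, ξᵢ, fᵢ)}_{i∈I} ⊆ ℝⁿ × ℝⁿ × ℝ. Then there exists a convex function f : ℝⁿ → ℝ such that x ↦ f(x) − (c/2)‖Ax‖² is convex, f(xᵢ) = fᵢ for all i ∈ I, and ξᵢ is a subgradient of f at xᵢ for all i ∈ I, if and only if for all i, j ∈ I one has (c/2)‖A(xᵢ − xⱼ)‖² ≤ fᵢ − fⱼ − ⟨ξⱼ, xᵢ − xⱼ⟩. -/

import Mathlib

open Matrix

private lemma dot_self_nonneg' {k : ℕ} (w : Fin k → ℝ) : 0 ≤ w ⬝ᵥ w :=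
  Finset.sum_nonneg fun _ _ => mul_self_nonneg _

private lemma convexOn_affine' {k : ℕ} (v : Fin k → ℝ) (b : ℝ) :
    ConvexOn ℝ Set.univ (fun y : Fin k → ℝ => v ⬝ᵥ y + b) := by
  refine ⟨convex_univ, fun p _ q _ a a' ha ha' hab => ?_⟩
  have h1 : a' = 1 - a := by linarith
  subst h1
  simp only [dotProduct_add, dotProduct_smul, smul_eq_mul]
  ring_nf
  exact le_of_eq (by ring)

private lemma convexOn_quad' {m n : ℕ} (c : ℝ) (hc : 0 ≤ c) (A : Matrix (Fin m) (Fin n) ℝ) :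
    ConvexOn ℝ Set.univ (fun y : Fin n → ℝ => c / 2 * ((A *ᵥ y) ⬝ᵥ (A *ᵥ y))) := by
  refine ⟨convex_univ, fun p _ q _ a a' ha ha' hab => ?_⟩
  have hd : 0 ≤ (A *ᵥ (p - q)) ⬝ᵥ (A *ᵥ (p - q)) := dot_self_nonneg' _
  have h1 : a' = 1 - a := by linarith
  subst h1
  have hcomm : (A *ᵥ p) ⬝ᵥ (A *ᵥ q) = (A *ᵥ q) ⬝ᵥ (A *ᵥ p) := dotProduct_comm _ _
  simp only [Matrix.mulVec_add, Matrix.mulVec_smul, Matrix.mulVec_sub] at *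
  simp only [dotProduct_add, add_dotProduct, dotProduct_smul, smul_dotProduct,
    dotProduct_sub, sub_dotProduct, smul_eq_mul] at *
  nlinarith [mul_nonneg (mul_nonneg (mul_nonneg ha (by linarith : (0:ℝ) ≤ 1 - a)) hc) hd]

private lemma convexOn_finset_sup' {α : Type*} {k : ℕ} (s : Finset α) (hs : s.Nonempty)
    (φ : α → (Fin k → ℝ) → ℝ) (h : ∀ i ∈ s, ConvexOn ℝ Set.univ (φ i)) :
    ConvexOn ℝ Set.univ (fun y => s.sup' hs fun i => φ i y) := by
  induction hs using Finset.Nonempty.cons_induction with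
  | singleton a => simpa using h a (by simp)
  | cons a s ha hs ih =>
    simp only [Finset.sup'_cons hs]
    exact (h a (by simp)).sup (ih fun i hi => h i (by simp [hi]))

private lemma phi_eq' {m n : ℕ} (c : ℝ) (A : Matrix (Fin m) (Fin n) ℝ) (Fj : ℝ)
    (xj ξj y : Fin n → ℝ) :
    Fj + ξj ⬝ᵥ (y - xj) + c / 2 * ((A *ᵥ (y - xj)) ⬝ᵥ (A *ᵥ (y - xj)))
      = c / 2 * ((A *ᵥ y) ⬝ᵥ (A *ᵥ y))
        + ((ξj - c • ((A *ᵥ xj) ᵥ* A)) ⬝ᵥ y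
          + (Fj - ξj ⬝ᵥ xj + c / 2 * ((A *ᵥ xj) ⬝ᵥ (A *ᵥ xj)))) := by
  have h1 : ((A *ᵥ xj) ᵥ* A) ⬝ᵥ y = (A *ᵥ xj) ⬝ᵥ (A *ᵥ y) := (dotProduct_mulVec _ _ _).symm
  have h2 : (A *ᵥ y) ⬝ᵥ (A *ᵥ xj) = (A *ᵥ xj) ⬝ᵥ (A *ᵥ y) := dotProduct_comm _ _
  simp only [Matrix.mulVec_sub, dotProduct_sub, sub_dotProduct, smul_dotProduct,
    smul_eq_mul, h1, h2]
  ring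

theorem stmt0 {m n : ℕ} (c : ℝ) (hc : 0 ≤ c) (A : Matrix (Fin m) (Fin n) ℝ)
    (ι : Type*) [Fintype ι] (x ξ : ι → (Fin n → ℝ)) (F : ι → ℝ) :
    (∃ f : (Fin n → ℝ) → ℝ,
      ConvexOn ℝ Set.univ f ∧
      ConvexOn ℝ Set.univ (fun y => f y - c / 2 * ((A *ᵥ y) ⬝ᵥ (A *ᵥ y))) ∧
      (∀ i, f (x i) = F i) ∧
      (∀ i (y : Fin n → ℝ), f (x i) + (ξ i) ⬝ᵥ (y - x i) ≤ f y)) ↔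
    (∀ i j, c / 2 * ((A *ᵥ (x i - x j)) ⬝ᵥ (A *ᵥ (x i - x j)))
        ≤ F i - F j - (ξ j) ⬝ᵥ (x i - x j)) := by
  constructor
  · rintro ⟨f, hfconv, hgconv, hval, hsub⟩ i j
    set P := (A *ᵥ x j) ⬝ᵥ (A *ᵥ x j) with hP
    set Q := (A *ᵥ x i) ⬝ᵥ (A *ᵥ x i) with hQ
    set R := (A *ᵥ x j) ⬝ᵥ (A *ᵥ x i) with hR
    have hLHS : (A *ᵥ (x i - x j)) ⬝ᵥ (A *ᵥ (x i - x j)) = Q - 2*R + P := by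
      have h2 : (A *ᵥ x i) ⬝ᵥ (A *ᵥ x j) = R := dotProduct_comm _ _
      simp only [Matrix.mulVec_sub, dotProduct_sub, sub_dotProduct, h2, hP, hQ, hR]
      ring
    have hw : ξ j ⬝ᵥ (x i - x j) = ξ j ⬝ᵥ x i - ξ j ⬝ᵥ x j := dotProduct_sub _ _ _
    have hraw : 0 ≤ (A *ᵥ (x i - x j)) ⬝ᵥ (A *ᵥ (x i - x j)) := dot_self_nonneg' _
    have hX0 : 0 ≤ c / 2 * (Q - 2*R + P) := by
      rw [← hLHS]; exact mul_nonneg (by linarith) hraw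
    apply le_of_forall_pos_le_add
    intro ε hε
    set X := c / 2 * (Q - 2*R + P) with hXdef
    set t : ℝ := min 1 (ε / (X + 1)) with ht
    have ht0 : 0 < t := lt_min one_pos (div_pos hε (by linarith))
    have ht1 : t ≤ 1 := min_le_left _ _
    have htX : t * X ≤ ε := by
      have h1 : t ≤ ε / (X + 1) := min_le_right _ _
      have h2 : t * X ≤ (ε / (X + 1)) * (X + 1) := by
        apply mul_le_mul h1 (by linarith) hX0 (le_of_lt (div_pos hε (by linarith)))
      rwa [div_mul_cancel₀ _ (by linarith : X + 1 ≠ 0)] at h2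
    have hexp : (A *ᵥ ((1 - t) • x j + t • x i)) ⬝ᵥ (A *ᵥ ((1 - t) • x j + t • x i))
        = (1 - t)^2 * P + 2*(1 - t)*t*R + t^2 * Q := by
      have h2 : (A *ᵥ x i) ⬝ᵥ (A *ᵥ x j) = R := dotProduct_comm _ _
      simp only [Matrix.mulVec_add, Matrix.mulVec_smul, dotProduct_add, add_dotProduct,
        dotProduct_smul, smul_dotProduct, smul_eq_mul, h2, hP, hQ, hR]
      ring
    have hcv := hgconv.2 (Set.mem_univ (x j)) (Set.mem_univ (x i))
      (by linarith : (0:ℝ) ≤ 1 - t) ht0.le (by ring)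
    simp only [smul_eq_mul] at hcv
    rw [hexp, hval i, hval j] at hcv
    have hyx : (1 - t) • x j + t • x i - x j = t • (x i - x j) := by
      ext k
      simp only [Pi.add_apply, Pi.sub_apply, Pi.smul_apply, smul_eq_mul]
      ring
    have hsg : F j + t * (ξ j ⬝ᵥ x i - ξ j ⬝ᵥ x j) ≤ f ((1 - t) • x j + t • x i) := by
      have h := hsub j ((1 - t) • x j + t • x i)
      rwa [hyx, dotProduct_smul, smul_eq_mul, hw, hval j] at h
    have step1 : t * ((1 - t) * X) ≤ t * (F i - F j - (ξ j ⬝ᵥ x i - ξ j ⬝ᵥ x j)) := by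
      rw [hXdef]; nlinarith [hsg, hcv]
    have step2 : (1 - t) * X ≤ F i - F j - (ξ j ⬝ᵥ x i - ξ j ⬝ᵥ x j) :=
      le_of_mul_le_mul_left step1 ht0
    rw [hLHS, hw]
    linarith [step2, htX]
  · intro h
    rcases isEmpty_or_nonempty ι with hι | hι
    · refine ⟨fun y => c / 2 * ((A *ᵥ y) ⬝ᵥ (A *ᵥ y)), convexOn_quad' c hc A, ?_,
        fun i => isEmptyElim i, fun i => isEmptyElim i⟩
      simp only [sub_self]
      exact convexOn_const 0 convex_univ
    · have hne : (Finset.univ : Finset ι).Nonempty := Finset.univ_nonempty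
      set φ : ι → (Fin n → ℝ) → ℝ := fun j y =>
        F j + ξ j ⬝ᵥ (y - x j) + c / 2 * ((A *ᵥ (y - x j)) ⬝ᵥ (A *ᵥ (y - x j))) with hφ
      have hφconv : ∀ j, ConvexOn ℝ Set.univ (φ j) := by
        intro j
        have : φ j = fun y => c / 2 * ((A *ᵥ y) ⬝ᵥ (A *ᵥ y))
            + ((ξ j - c • ((A *ᵥ x j) ᵥ* A)) ⬝ᵥ y
              + (F j - ξ j ⬝ᵥ x j + c / 2 * ((A *ᵥ x j) ⬝ᵥ (A *ᵥ x j)))) :=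
          funext fun y => phi_eq' c A (F j) (x j) (ξ j) y
        rw [this]
        exact (convexOn_quad' c hc A).add (convexOn_affine' _ _)
      have hφself : ∀ i, φ i (x i) = F i := by
        intro i
        simp [hφ, sub_self, Matrix.mulVec_zero]
      have hφle : ∀ i j, φ j (x i) ≤ F i := by
        intro i j
        have := h i j
        simp only [hφ]
        linarith
      have hfval : ∀ i, (Finset.univ.sup' hne fun j => φ j (x i)) = F i := by
        intro i
        refine le_antisymm (Finset.sup'_le _ _ fun j _ => hφle i j) ?_
        have := Finset.le_sup' (fun j => φ j (x i)) (Finset.mem_univ i)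
        rwa [hφself i] at this
      refine ⟨fun y => Finset.univ.sup' hne fun j => φ j y, ?_, ?_, hfval, ?_⟩
      · exact convexOn_finset_sup' _ hne φ (fun j _ => hφconv j)
      · have key : (fun y => (Finset.univ.sup' hne fun j => φ j y)
            - c / 2 * ((A *ᵥ y) ⬝ᵥ (A *ᵥ y)))
            = fun y => Finset.univ.sup' hne fun j =>
              ((ξ j - c • ((A *ᵥ x j) ᵥ* A)) ⬝ᵥ y
                + (F j - ξ j ⬝ᵥ x j + c / 2 * ((A *ᵥ x j) ⬝ᵥ (A *ᵥ x j)))) := by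
          funext y
          rw [sub_eq_iff_eq_add]
          rw [show (Finset.univ.sup' hne fun j =>
              ((ξ j - c • ((A *ᵥ x j) ᵥ* A)) ⬝ᵥ y
                + (F j - ξ j ⬝ᵥ x j + c / 2 * ((A *ᵥ x j) ⬝ᵥ (A *ᵥ x j)))))
              + c / 2 * ((A *ᵥ y) ⬝ᵥ (A *ᵥ y))
            = Finset.univ.sup' hne fun j =>
              (((ξ j - c • ((A *ᵥ x j) ᵥ* A)) ⬝ᵥ y
                + (F j - ξ j ⬝ᵥ x j + c / 2 * ((A *ᵥ x j) ⬝ᵥ (A *ᵥ x j))))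
                + c / 2 * ((A *ᵥ y) ⬝ᵥ (A *ᵥ y))) from ?_]
          · refine Finset.sup'_congr hne rfl fun j _ => ?_
            simp only [hφ]
            rw [phi_eq' c A (F j) (x j) (ξ j) y]
            ring
          · exact Finset.comp_sup'_eq_sup'_comp hne (fun z => z + c / 2 * ((A *ᵥ y) ⬝ᵥ (A *ᵥ y)))
              (fun u v => by exact (max_add_add_right u v _).symm)
        rw [key]
        apply convexOn_finset_sup' _ hne
        intro j _
        exact convexOn_affine' _ _
      · intro i y
        dsimp only
        rw [hfval i]
        have h1 : F i + ξ i ⬝ᵥ (y - x i) ≤ φ i y := by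
          have : 0 ≤ c / 2 * ((A *ᵥ (y - x i)) ⬝ᵥ (A *ᵥ (y - x i))) :=
            mul_nonneg (by linarith) (dot_self_nonneg' _)
          simp only [hφ]
          linarith
        exact h1.trans (Finset.le_sup' (fun j => φ j y) (Finset.mem_univ i))
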